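/- Let S = ℂ⟨x,y,z⟩/(yz + zy + x², zx + xz + y², xy + yx + z²) be the degenerate Sklyanin algebra S(1,1,1), graded with x, y, z in degree 1. Then dim_ℂ S_d = 3·2^{d−1} for all d ≥ 1. -/

import Mathlib

open FreeAlgebra

/-- Generators `x = X 0`, `y = X 1`, `z = X 2` of the free algebra `ℂ⟨x,y,z⟩`. -/
noncomputable def X (i : Fin 3) : FreeAlgebra ℂ (Fin 3) := FreeAlgebra.ι ℂ i

/-- The defining relations of the degenerate Sklyanin algebra `S(1,1,1)`:
`yz + zy + x² = 0`, `zx + xz + y² = 0`, `xy + yx + z² = 0`. -/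
def sklyaninRel : FreeAlgebra ℂ (Fin 3) → FreeAlgebra ℂ (Fin 3) → Prop :=
  fun p q => q = 0 ∧
    (p = X 1 * X 2 + X 2 * X 1 + X 0 * X 0 ∨
     p = X 2 * X 0 + X 0 * X 2 + X 1 * X 1 ∨
     p = X 0 * X 1 + X 1 * X 0 + X 2 * X 2)

/-- The degenerate Sklyanin algebra `S(1,1,1) = ℂ⟨x,y,z⟩/(yz+zy+x², zx+xz+y², xy+yx+z²)`. -/
noncomputable def Sklyanin : Type := RingQuot sklyaninRel

noncomputable instance : Ring Sklyanin := inferInstanceAs (Ring (RingQuot sklyaninRel))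
noncomputable instance : Algebra ℂ Sklyanin := inferInstanceAs (Algebra ℂ (RingQuot sklyaninRel))

/-- The span of the degree-`d` monomials in the free algebra `ℂ⟨x,y,z⟩`. -/
noncomputable def freeDeg (d : ℕ) : Submodule ℂ (FreeAlgebra ℂ (Fin 3)) :=
  Submodule.span ℂ {v | ∃ w : List (Fin 3), w.length = d ∧ v = (w.map (X ·)).prod}

/-- The degree-`d` graded component of `S(1,1,1)`: the image in the quotient of
the span of all words of length `d` in the generators (the relations being
homogeneous of degree 2, this is the degree-`d` piece of the grading). -/
noncomputable def SklyaninDeg (d : ℕ) : Submodule ℂ Sklyanin :=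
  (freeDeg d).map (RingQuot.mkAlgHom ℂ sklyaninRel).toLinearMap


/- ## Normal words -/

/-- A word is normal if the letter `0` occurs only in the last position. -/
abbrev Nml (w : List (Fin 3)) : Prop := ∀ a ∈ w.dropLast, a ≠ (0 : Fin 3)

lemma nml_nil : Nml [] := by intro a h; simp at h

lemma nml_singleton (a : Fin 3) : Nml [a] := by intro b h; simp at h

lemma nml_cons {a : Fin 3} (ha : a ≠ 0) {w : List (Fin 3)} : Nml (a :: w) ↔ Nml w := by
  cases w with
  | nil => simp [nml_nil, nml_singleton, Nml]
  | cons b t => simp [Nml, List.dropLast, ha]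

lemma nml_tail {a : Fin 3} {w : List (Fin 3)} (h : Nml (a :: w)) : Nml w := by
  cases w with
  | nil => exact nml_nil
  | cons b t =>
    intro c hc
    exact h c (by simpa [List.dropLast] using Or.inr hc)

lemma nml_zero_cons {w : List (Fin 3)} (h : Nml (0 :: w)) : w = [] := by
  cases w with
  | nil => rfl
  | cons b t => exact absurd rfl (h 0 (by simp [List.dropLast]))

/-- The type of normal words. -/
abbrev NW : Type := {w : List (Fin 3) // Nml w}

/-- Free module on normal words. -/
abbrev V : Type := NW →₀ ℂ

/-- Basis vector for a normal word (`0` for non-normal input). -/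
noncomputable def e (w : List (Fin 3)) : V :=
  if h : Nml w then Finsupp.single ⟨w, h⟩ 1 else 0

lemma e_of {w : List (Fin 3)} (h : Nml w) : e w = Finsupp.single (⟨w, h⟩ : NW) 1 := by
  rw [e, dif_pos h]

/-- Prepending a letter, as a linear map (meant for letters `1`, `2`). -/
noncomputable def P (a : Fin 3) : V →ₗ[ℂ] V :=
  Finsupp.lift V ℂ NW (fun w => e (a :: w.1))

lemma P_single {a : Fin 3} (w : NW) (c : ℂ) :
    P a (Finsupp.single w c) = c • e (a :: w.1) := by
  simp [P, Finsupp.lift_apply, Finsupp.sum_single_index]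

lemma P_e (a : Fin 3) (ha : a ≠ 0) (w : List (Fin 3)) : P a (e w) = e (a :: w) := by
  by_cases h : Nml w
  · rw [e_of h, P_single, one_smul]
  · rw [e, dif_neg h, map_zero, e, dif_neg (fun hc => h ((nml_cons ha).mp hc))]

/-- The normal form of `x·w` for a normal word `w`. -/
noncomputable def N0 : List (Fin 3) → V
  | [] => e [0]
  | (a :: u) =>
      if a = 0 then -e (1 :: 2 :: u) - e (2 :: 1 :: u)
      else if a = 1 then -(P 1 (N0 u)) - e (2 :: 2 :: u)
      else -(P 2 (N0 u)) - e (1 :: 1 :: u)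

lemma N0_nil : N0 [] = e [0] := rfl
lemma N0_zero (u : List (Fin 3)) : N0 (0 :: u) = -e (1 :: 2 :: u) - e (2 :: 1 :: u) := by
  simp [N0]
lemma N0_one (u : List (Fin 3)) : N0 (1 :: u) = -(P 1 (N0 u)) - e (2 :: 2 :: u) := by
  simp [N0]
lemma N0_two (u : List (Fin 3)) : N0 (2 :: u) = -(P 2 (N0 u)) - e (1 :: 1 :: u) := by
  simp [N0]

/-- Left multiplication by `x` on normal forms. -/
noncomputable def L0 : V →ₗ[ℂ] V :=
  Finsupp.lift V ℂ NW (fun w => N0 w.1)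

lemma L0_single (w : NW) (c : ℂ) : L0 (Finsupp.single w c) = c • N0 w.1 := by
  simp [L0, Finsupp.lift_apply, Finsupp.sum_single_index]

lemma L0_e {w : List (Fin 3)} (h : Nml w) : L0 (e w) = N0 w := by
  rw [e_of h, L0_single, one_smul]

lemma P1_e (w : List (Fin 3)) : P 1 (e w) = e (1 :: w) := P_e 1 (by decide) w
lemma P2_e (w : List (Fin 3)) : P 2 (e w) = e (2 :: w) := P_e 2 (by decide) w

lemma nml_one_cons {w : List (Fin 3)} (h : Nml w) : Nml (1 :: w) :=
  (nml_cons (by decide)).mpr h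
lemma nml_two_cons {w : List (Fin 3)} (h : Nml w) : Nml (2 :: w) :=
  (nml_cons (by decide)).mpr h

lemma L0_P1_apply (v : V) : L0 (P 1 v) = -(P 1 (L0 v)) - P 2 (P 2 v) := by
  induction v using Finsupp.induction_linear with
  | zero => simp
  | add f g hf hg => simp only [map_add, hf, hg]; abel
  | single w c =>
    simp only [P_single, L0_single, map_smul, L0_e (nml_one_cons w.2), N0_one,
      P2_e, smul_sub, smul_neg]

lemma L0_P2_apply (v : V) : L0 (P 2 v) = -(P 2 (L0 v)) - P 1 (P 1 v) := by
  induction v using Finsupp.induction_linear with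
  | zero => simp
  | add f g hf hg => simp only [map_add, hf, hg]; abel
  | single w c =>
    simp only [P_single, L0_single, map_smul, L0_e (nml_two_cons w.2), N0_two,
      P1_e, smul_sub, smul_neg]

/-- The relation `zx + xz + y²` acts as zero. -/
lemma idg (v : V) : P 2 (L0 v) + L0 (P 2 v) + P 1 (P 1 v) = 0 := by
  rw [L0_P2_apply]; abel

/-- The relation `xy + yx + z²` acts as zero. -/
lemma idh (v : V) : L0 (P 1 v) + P 1 (L0 v) + P 2 (P 2 v) = 0 := by
  rw [L0_P1_apply]; abel

/-- The relation `yz + zy + x²` acts as zero. -/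
lemma idf (w : List (Fin 3)) (hw : Nml w) :
    P 1 (P 2 (e w)) + P 2 (P 1 (e w)) + L0 (L0 (e w)) = 0 := by
  induction w with
  | nil =>
    rw [L0_e nml_nil, N0_nil, L0_e (by decide), N0_zero, P2_e, P1_e, P1_e, P2_e]
    abel
  | cons a u ih =>
    have hu : Nml u := nml_tail hw
    have h2u : Nml (2 :: u) := nml_two_cons hu
    have h1u : Nml (1 :: u) := nml_one_cons hu
    have key : L0 (L0 (e u)) = -(P 1 (P 2 (e u))) - P 2 (P 1 (e u)) := by
      have := ih hu
      linear_combination (norm := abel) this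
    fin_cases a
    · -- a = 0, so u = []
      have hnil : u = [] := nml_zero_cons hw
      subst hnil
      show P 1 (P 2 (e [0])) + P 2 (P 1 (e [0])) + L0 (L0 (e [0])) = 0
      rw [L0_e (show Nml [0] by decide), N0_zero, map_sub, map_neg,
        L0_e (show Nml [1,2] by decide), L0_e (show Nml [2,1] by decide)]
      simp only [N0_one, N0_two, N0_nil, map_sub, map_neg, P1_e, P2_e]
      abel
    · -- a = 1
      show P 1 (P 2 (e (1 :: u))) + P 2 (P 1 (e (1 :: u))) + L0 (L0 (e (1 :: u))) = 0
      rw [L0_e h1u, N0_one, map_sub, map_neg, L0_P1_apply,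
        L0_e (nml_two_cons h2u), N0_two, N0_two,
        show N0 u = L0 (e u) from (L0_e hu).symm, key]
      simp only [map_sub, map_neg, map_add, P1_e, P2_e]
      abel
    · -- a = 2
      show P 1 (P 2 (e (2 :: u))) + P 2 (P 1 (e (2 :: u))) + L0 (L0 (e (2 :: u))) = 0
      rw [L0_e h2u, N0_two, map_sub, map_neg, L0_P2_apply,
        L0_e (nml_one_cons h1u), N0_one, N0_one,
        show N0 u = L0 (e u) from (L0_e hu).symm, key]
      simp only [map_sub, map_neg, map_add, P1_e, P2_e]
      abel


/- ## The representation of `S(1,1,1)` on normal forms -/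

noncomputable def L : Fin 3 → Module.End ℂ V := ![L0, P 1, P 2]

lemma L_zero : L 0 = L0 := rfl
lemma L_one : L 1 = P 1 := rfl
lemma L_two : L 2 = P 2 := rfl

noncomputable def Φ : FreeAlgebra ℂ (Fin 3) →ₐ[ℂ] Module.End ℂ V :=
  FreeAlgebra.lift ℂ L

lemma Φ_X (i : Fin 3) : Φ (X i) = L i := FreeAlgebra.lift_ι_apply _ _

lemma Φ_rel : ∀ ⦃p q : FreeAlgebra ℂ (Fin 3)⦄, sklyaninRel p q → Φ p = Φ q := by
  rintro p q ⟨rfl, (rfl | rfl | rfl)⟩ <;>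
  · rw [map_zero]
    apply Finsupp.lhom_ext
    intro w c
    have hw := w.2
    simp only [map_add, map_mul, Φ_X, LinearMap.add_apply, Module.End.mul_apply,
      LinearMap.zero_apply, L_zero, L_one, L_two]
    rw [show (Finsupp.single w c : V) = c • e w.1 from by rw [e_of hw, Finsupp.smul_single, smul_eq_mul, mul_one, Subtype.coe_eta]]
    simp only [map_smul]
    rw [← smul_add, ← smul_add]
    first
    | rw [idf w.1 hw, smul_zero]
    | rw [idg (e w.1), smul_zero]
    | rw [idh (e w.1), smul_zero]


/-- The projection onto the Sklyanin algebra. -/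
noncomputable def pr : FreeAlgebra ℂ (Fin 3) →ₐ[ℂ] Sklyanin :=
  RingQuot.mkAlgHom ℂ sklyaninRel

/-- The monomial associated to a word. -/
noncomputable def M (w : List (Fin 3)) : FreeAlgebra ℂ (Fin 3) :=
  (w.map (X ·)).prod

lemma M_nil : M [] = 1 := rfl
lemma M_cons (a : Fin 3) (w : List (Fin 3)) : M (a :: w) = X a * M w := by
  simp [M]

/-- The representation, descended to the quotient. -/
noncomputable def Φ' : Sklyanin →ₐ[ℂ] Module.End ℂ V :=
  RingQuot.liftAlgHom ℂ ⟨Φ, Φ_rel⟩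

lemma Φ'_pr (a : FreeAlgebra ℂ (Fin 3)) : Φ' (pr a) = Φ a :=
  RingQuot.liftAlgHom_mkAlgHom_apply ℂ Φ Φ_rel a

/-- The normal-form linear map on the Sklyanin algebra. -/
noncomputable def Ψ : Sklyanin →ₗ[ℂ] V where
  toFun s := Φ' s (e [])
  map_add' x y := by
    change Φ' (x + y) (e []) = Φ' x (e []) + Φ' y (e [])
    rw [map_add]; rfl
  map_smul' c x := by
    change Φ' (c • x) (e []) = c • Φ' x (e [])
    rw [map_smul]; rfl

lemma Ψ_normal : ∀ (w : List (Fin 3)), Nml w → Ψ (pr (M w)) = e w := by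
  intro w
  induction w with
  | nil =>
    intro _
    show Φ' (pr (M [])) (e []) = e []
    rw [M_nil, map_one, map_one]
    rfl
  | cons a u ih =>
    intro hw
    have hu : Nml u := nml_tail hw
    show Φ' (pr (M (a :: u))) (e []) = e (a :: u)
    rw [M_cons, map_mul, map_mul, Module.End.mul_apply]
    have : Φ' (pr (M u)) (e []) = e u := ih hu
    rw [this, Φ'_pr, Φ_X]
    fin_cases a
    · have hnil : u = [] := nml_zero_cons hw
      subst hnil
      show L0 (e []) = e [0]
      rw [L0_e nml_nil, N0_nil]
    · exact P1_e u
    · exact P2_e u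


/- ## The finset of normal words of each length -/

def F : ℕ → Finset (List (Fin 3))
  | 0 => {[]}
  | (n + 1) =>
      ((F n).image (List.cons 1) ∪ (F n).image (List.cons 2)) ∪
        (if n = 0 then {[0]} else ∅)

lemma mem_F_succ {n : ℕ} {w : List (Fin 3)} :
    w ∈ F (n + 1) ↔ (∃ u ∈ F n, w = 1 :: u ∨ w = 2 :: u) ∨ (n = 0 ∧ w = [0]) := by
  rw [F]
  rcases Nat.eq_zero_or_pos n with h | h
  · subst h
    simp only [if_pos rfl, Finset.mem_union, Finset.mem_image]
    constructor
    · rintro ((⟨u, hu, rfl⟩ | ⟨u, hu, rfl⟩) | h)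
      · exact Or.inl ⟨u, hu, Or.inl rfl⟩
      · exact Or.inl ⟨u, hu, Or.inr rfl⟩
      · refine Or.inr ⟨?_, ?_⟩
        · trivial
        · simpa using h
    · rintro (⟨u, hu, rfl | rfl⟩ | ⟨-, rfl⟩)
      · exact Or.inl (Or.inl ⟨u, hu, rfl⟩)
      · exact Or.inl (Or.inr ⟨u, hu, rfl⟩)
      · simp
  · rw [if_neg (Nat.pos_iff_ne_zero.mp h)]
    simp only [Finset.union_empty, Finset.mem_union, Finset.mem_image]
    constructor
    · rintro (⟨u, hu, rfl⟩ | ⟨u, hu, rfl⟩)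
      · exact Or.inl ⟨u, hu, Or.inl rfl⟩
      · exact Or.inl ⟨u, hu, Or.inr rfl⟩
    · rintro (⟨u, hu, rfl | rfl⟩ | ⟨h0, -⟩)
      · exact Or.inl ⟨u, hu, rfl⟩
      · exact Or.inr ⟨u, hu, rfl⟩
      · exact absurd h0 (Nat.pos_iff_ne_zero.mp h)

lemma mem_F_zero {w : List (Fin 3)} : w ∈ F 0 ↔ w = [] := by simp [F]

lemma cons_mem_F {a : Fin 3} (ha : a ≠ 0) {w : List (Fin 3)} {n : ℕ} (hw : w ∈ F n) :
    a :: w ∈ F (n + 1) := by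
  rcases Nat.eq_zero_or_pos n with h | h
  · subst h
    rw [mem_F_zero] at hw
    subst hw
    fin_cases a
    · exact absurd rfl ha
    · exact mem_F_succ.mpr (Or.inl ⟨[], by simp [mem_F_zero], Or.inl rfl⟩)
    · exact mem_F_succ.mpr (Or.inl ⟨[], by simp [mem_F_zero], Or.inr rfl⟩)
  · fin_cases a
    · exact absurd rfl ha
    · exact mem_F_succ.mpr (Or.inl ⟨w, hw, Or.inl rfl⟩)
    · exact mem_F_succ.mpr (Or.inl ⟨w, hw, Or.inr rfl⟩)

lemma zero_mem_F_one : [0] ∈ F 1 := by decide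


lemma F_length : ∀ (n : ℕ) (w : List (Fin 3)), w ∈ F n → w.length = n := by
  intro n
  induction n with
  | zero => intro w hw; rw [mem_F_zero] at hw; simp [hw]
  | succ n ih =>
    intro w hw
    rcases mem_F_succ.mp hw with ⟨u, hu, rfl | rfl⟩ | ⟨rfl, rfl⟩
    · simp [ih u hu]
    · simp [ih u hu]
    · rfl

lemma F_nml : ∀ (n : ℕ) (w : List (Fin 3)), w ∈ F n → Nml w := by
  intro n
  induction n with
  | zero => intro w hw; rw [mem_F_zero] at hw; subst hw; exact nml_nil
  | succ n ih =>
    intro w hw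
    rcases mem_F_succ.mp hw with ⟨u, hu, rfl | rfl⟩ | ⟨rfl, rfl⟩
    · exact nml_one_cons (ih u hu)
    · exact nml_two_cons (ih u hu)
    · exact nml_singleton 0

lemma F_card : ∀ n : ℕ, (F (n + 1)).card = 3 * 2 ^ n := by
  intro n
  induction n with
  | zero => decide
  | succ n ih =>
    have h1 : Function.Injective (List.cons (1 : Fin 3)) := fun a b h => by
      simpa using h
    have h2 : Function.Injective (List.cons (2 : Fin 3)) := fun a b h => by
      simpa using h
    have hdisj : Disjoint ((F (n+1)).image (List.cons 1)) ((F (n+1)).image (List.cons 2)) := by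
      rw [Finset.disjoint_left]
      rintro w hw1 hw2
      rcases Finset.mem_image.mp hw1 with ⟨u, -, rfl⟩
      rcases Finset.mem_image.mp hw2 with ⟨v, -, hv⟩
      exact absurd (List.head_eq_of_cons_eq hv.symm) (by decide)
    rw [show F (n + 2) = ((F (n+1)).image (List.cons 1) ∪ (F (n+1)).image (List.cons 2)) ∪
        (if n + 1 = 0 then {[0]} else ∅) from rfl]
    rw [if_neg (Nat.succ_ne_zero n), Finset.union_empty,
      Finset.card_union_of_disjoint hdisj,
      Finset.card_image_of_injective _ h1, Finset.card_image_of_injective _ h2, ih]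
    ring


/- ## Spanning -/

lemma pr_xx : pr (X 0) * pr (X 0) = -(pr (X 1) * pr (X 2)) - pr (X 2) * pr (X 1) := by
  have h : pr (X 1) * pr (X 2) + pr (X 2) * pr (X 1) + pr (X 0) * pr (X 0) = 0 := by
    have h0 := RingQuot.mkAlgHom_rel ℂ (s := sklyaninRel)
      (x := X 1 * X 2 + X 2 * X 1 + X 0 * X 0) (y := 0) ⟨rfl, Or.inl rfl⟩
    simp only [map_add, map_mul, map_zero] at h0; exact h0
  calc pr (X 0) * pr (X 0)
      = (pr (X 1) * pr (X 2) + pr (X 2) * pr (X 1) + pr (X 0) * pr (X 0))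
        - pr (X 1) * pr (X 2) - pr (X 2) * pr (X 1) := by abel
    _ = -(pr (X 1) * pr (X 2)) - pr (X 2) * pr (X 1) := by rw [h]; abel

lemma pr_xz : pr (X 0) * pr (X 2) = -(pr (X 2) * pr (X 0)) - pr (X 1) * pr (X 1) := by
  have h : pr (X 2) * pr (X 0) + pr (X 0) * pr (X 2) + pr (X 1) * pr (X 1) = 0 := by
    have h0 := RingQuot.mkAlgHom_rel ℂ (s := sklyaninRel)
      (x := X 2 * X 0 + X 0 * X 2 + X 1 * X 1) (y := 0) ⟨rfl, Or.inr (Or.inl rfl)⟩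
    simp only [map_add, map_mul, map_zero] at h0; exact h0
  calc pr (X 0) * pr (X 2)
      = (pr (X 2) * pr (X 0) + pr (X 0) * pr (X 2) + pr (X 1) * pr (X 1))
        - pr (X 2) * pr (X 0) - pr (X 1) * pr (X 1) := by abel
    _ = -(pr (X 2) * pr (X 0)) - pr (X 1) * pr (X 1) := by rw [h]; abel

lemma pr_xy : pr (X 0) * pr (X 1) = -(pr (X 1) * pr (X 0)) - pr (X 2) * pr (X 2) := by
  have h : pr (X 0) * pr (X 1) + pr (X 1) * pr (X 0) + pr (X 2) * pr (X 2) = 0 := by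
    have h0 := RingQuot.mkAlgHom_rel ℂ (s := sklyaninRel)
      (x := X 0 * X 1 + X 1 * X 0 + X 2 * X 2) (y := 0) ⟨rfl, Or.inr (Or.inr rfl)⟩
    simp only [map_add, map_mul, map_zero] at h0; exact h0
  calc pr (X 0) * pr (X 1)
      = (pr (X 0) * pr (X 1) + pr (X 1) * pr (X 0) + pr (X 2) * pr (X 2))
        - pr (X 1) * pr (X 0) - pr (X 2) * pr (X 2) := by abel
    _ = -(pr (X 1) * pr (X 0)) - pr (X 2) * pr (X 2) := by rw [h]; abel

/-- The span of the images of the normal words of length `k`. -/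
noncomputable def SpanF (k : ℕ) : Submodule ℂ Sklyanin :=
  Submodule.span ℂ ((fun v => pr (M v)) '' ↑(F k))

lemma M_mem_SpanF {k : ℕ} {v : List (Fin 3)} (hv : v ∈ F k) : pr (M v) ∈ SpanF k :=
  Submodule.subset_span ⟨v, hv, rfl⟩

lemma mulX_span {b : Fin 3} (hb : b ≠ 0) {k : ℕ} {t : Sklyanin} (ht : t ∈ SpanF k) :
    pr (X b) * t ∈ SpanF (k + 1) := by
  have h1 := Submodule.apply_mem_span_image_of_mem_span
    (LinearMap.mulLeft ℂ (pr (X b))) ht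
  refine Submodule.span_le.mpr ?_ h1
  rintro x ⟨y, ⟨v, hv, rfl⟩, rfl⟩
  refine Submodule.subset_span ⟨b :: v, cons_mem_F hb hv, ?_⟩
  show pr (M (b :: v)) = (LinearMap.mulLeft ℂ (pr (X b))) (pr (M v))
  rw [LinearMap.mulLeft_apply, M_cons, map_mul]

lemma lemA : ∀ (k : ℕ) (a : Fin 3) (w : List (Fin 3)), w ∈ F k →
    pr (X a * M w) ∈ SpanF (k + 1) := by
  intro k
  induction k using Nat.strong_induction_on with
  | _ k ih =>
    intro a w hw
    fin_cases a
    · -- a = 0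
      show pr (X 0 * M w) ∈ SpanF (k + 1)
      cases k with
      | zero =>
        rw [mem_F_zero] at hw
        subst hw
        rw [show X 0 * M [] = M [0] by rw [M_nil, M_cons, M_nil]]
        exact M_mem_SpanF zero_mem_F_one
      | succ n =>
        rcases mem_F_succ.mp hw with ⟨u, hu, rfl | rfl⟩ | ⟨rfl, rfl⟩
        · -- w = 1 :: u
          have h1 : pr (X 0 * M (1 :: u)) =
              -(pr (X 1) * pr (X 0 * M u)) - pr (M (2 :: 2 :: u)) := by
            rw [M_cons, M_cons, M_cons, ← mul_assoc]
            simp only [map_mul]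
            rw [← mul_assoc, pr_xy]
            noncomm_ring
          rw [h1]
          have h2 : pr (X 0 * M u) ∈ SpanF (n + 1) := ih n (Nat.lt_succ_self n) 0 u hu
          exact sub_mem (neg_mem (mulX_span (by decide) h2))
            (M_mem_SpanF (cons_mem_F (by decide) (cons_mem_F (by decide) hu)))
        · -- w = 2 :: u
          have h1 : pr (X 0 * M (2 :: u)) =
              -(pr (X 2) * pr (X 0 * M u)) - pr (M (1 :: 1 :: u)) := by
            rw [M_cons, M_cons, M_cons, ← mul_assoc]
            simp only [map_mul]
            rw [← mul_assoc, pr_xz]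
            noncomm_ring
          rw [h1]
          have h2 : pr (X 0 * M u) ∈ SpanF (n + 1) := ih n (Nat.lt_succ_self n) 0 u hu
          exact sub_mem (neg_mem (mulX_span (by decide) h2))
            (M_mem_SpanF (cons_mem_F (by decide) (cons_mem_F (by decide) hu)))
        · -- w = [0], n = 0
          have h1 : pr (X 0 * M [0]) = -pr (M [1, 2]) - pr (M [2, 1]) := by
            simp only [M_cons, M_nil, mul_one, map_mul]
            rw [pr_xx]
          rw [h1]
          have m12 : ([1, 2] : List (Fin 3)) ∈ F 2 :=
            cons_mem_F (by decide) (cons_mem_F (by decide) (mem_F_zero.mpr rfl))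
          have m21 : ([2, 1] : List (Fin 3)) ∈ F 2 :=
            cons_mem_F (by decide) (cons_mem_F (by decide) (mem_F_zero.mpr rfl))
          exact sub_mem (neg_mem (M_mem_SpanF m12)) (M_mem_SpanF m21)
    · -- a = 1
      show pr (X 1 * M w) ∈ SpanF (k + 1)
      rw [← M_cons]
      exact M_mem_SpanF (cons_mem_F (by decide) hw)
    · -- a = 2
      show pr (X 2 * M w) ∈ SpanF (k + 1)
      rw [← M_cons]
      exact M_mem_SpanF (cons_mem_F (by decide) hw)

lemma lemB (w : List (Fin 3)) : pr (M w) ∈ SpanF w.length := by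
  induction w with
  | nil => exact M_mem_SpanF (mem_F_zero.mpr rfl)
  | cons a u ih =>
    rw [M_cons, map_mul]
    have h2 := Submodule.apply_mem_span_image_of_mem_span
      (LinearMap.mulLeft ℂ (pr (X a))) ih
    refine Submodule.span_le.mpr ?_ h2
    rintro x ⟨y, ⟨v, hv, rfl⟩, rfl⟩
    show (LinearMap.mulLeft ℂ (pr (X a))) (pr (M v)) ∈ SpanF (u.length + 1)
    rw [LinearMap.mulLeft_apply, ← map_mul]
    exact lemA u.length a v hv

/-- `dim_ℂ S(1,1,1)_d = 3·2^{d−1}` for all `d ≥ 1`. -/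
theorem sklyanin_hilbert (d : ℕ) (hd : 1 ≤ d) :
    Module.finrank ℂ (SklyaninDeg d) = 3 * 2 ^ (d - 1) := by
  classical
  set fam : {x // x ∈ F d} → Sklyanin := fun w => pr (M w.1) with hfam
  -- the range of the family is the image of `F d`
  have hrange : Set.range fam = (fun v => pr (M v)) '' ↑(F d) := by
    ext x
    constructor
    · rintro ⟨w, rfl⟩; exact ⟨w.1, w.2, rfl⟩
    · rintro ⟨v, hv, rfl⟩; exact ⟨⟨v, hv⟩, rfl⟩
  -- the degree-d component equals the span of the normal monomials
  have heq : SklyaninDeg d = Submodule.span ℂ (Set.range fam) := by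
    rw [hrange, SklyaninDeg, freeDeg]; erw [Submodule.map_span]
    apply le_antisymm
    · rw [Submodule.span_le]
      rintro x ⟨v, ⟨w, hwlen, rfl⟩, rfl⟩
      exact hwlen ▸ lemB w
    · rw [Submodule.span_le]
      rintro x ⟨v, hv, rfl⟩
      exact Submodule.subset_span
        ⟨M v, ⟨v, F_length d v hv, rfl⟩, rfl⟩
  -- linear independence via the normal-form map Ψ
  have hinj : Function.Injective
      (fun w : {x // x ∈ F d} => (⟨w.1, F_nml d w.1 w.2⟩ : NW)) := by
    intro a b hab
    simp only [Subtype.mk.injEq] at hab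
    exact Subtype.ext hab
  have hli0 : LinearIndependent ℂ
      (fun w : {x // x ∈ F d} => Finsupp.single (⟨w.1, F_nml d w.1 w.2⟩ : NW) (1 : ℂ)) := by
    have hb := (Finsupp.basisSingleOne (R := ℂ) (ι := NW)).linearIndependent
    have h2 := hb.comp _ hinj
    simp only [Finsupp.coe_basisSingleOne] at h2; exact h2
  have hli : LinearIndependent ℂ fam := by
    apply LinearIndependent.of_comp Ψ
    have hcomp : (⇑Ψ ∘ fam) =
        fun w : {x // x ∈ F d} => Finsupp.single (⟨w.1, F_nml d w.1 w.2⟩ : NW) (1 : ℂ) := by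
      funext w
      show Ψ (pr (M w.1)) = _
      rw [Ψ_normal w.1 (F_nml d w.1 w.2), e_of (F_nml d w.1 w.2)]
    rw [hcomp]
    exact hli0
  rw [heq, finrank_span_eq_card hli, Fintype.card_coe]
  obtain ⟨n, rfl⟩ : ∃ n, d = n + 1 := ⟨d - 1, (Nat.succ_pred_eq_of_pos hd).symm⟩
  rw [F_card n]
  simp
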